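/- Let T be a linear tree (as a 3-uniform hypergraph) inside a 3-uniform hypergraph H with no linear cycle, and suppose all hyperedges of T contain a common vertex b, with E(T) = {v_1v_2b, v_3v_4b, ..., v_{2s−1}v_{2s}b} for some s ≥ 3, and suppose the longest linear path in H has length at most 2. Then v_iv_jv_k ∉ E(H) for any distinct i, j, k ∈ {1,...,2s}; that is, every hyperedge of H contained in V(T) contains b. -/
import Mathlib


/-- A linear cycle of length `k ≥ 3` in a 3-uniform hypergraph with edge set `E`:
an alternating cyclic sequence of distinct vertices `v i` and distinct hyperedges `h i`
with `h i ∩ h (i+1) = {v (i+1)}` and non-consecutive hyperedges disjoint. -/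
def IsLinearCycle {V : Type*} [DecidableEq V] (E : Finset (Finset V)) (k : ℕ)
    (v : ZMod k → V) (h : ZMod k → Finset V) : Prop :=
  3 ≤ k ∧ Function.Injective v ∧ Function.Injective h ∧
    (∀ i, h i ∈ E) ∧ (∀ i, h i ∩ h (i + 1) = {v (i + 1)}) ∧
    (∀ i j, i ≠ j → i + 1 ≠ j → j + 1 ≠ i → h i ∩ h j = ∅)

/-- `E` contains a linear cycle. -/
def HasLinearCycle {V : Type*} [DecidableEq V] (E : Finset (Finset V)) : Prop :=
  ∃ (k : ℕ) (v : ZMod k → V) (h : ZMod k → Finset V), IsLinearCycle E k v h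

/-- The degree of a vertex: the number of hyperedges containing it. -/
def hDegree {V : Type*} [DecidableEq V] (E : Finset (Finset V)) (v : V) : ℕ :=
  (E.filter (fun e => v ∈ e)).card

/-- The support of a vertex `v` in a hyperedge `h`: the pairs of `h` that form a
hyperedge together with `v`. -/
def hSupport {V : Type*} [DecidableEq V] (E : Finset (Finset V)) (h : Finset V) (v : V) :
    Finset (Finset V) :=
  (h.powersetCard 2).filter (fun p => insert v p ∈ E)

/-- A pair of vertices is thick if at least two hyperedges contain it. -/
def ThickPair {V : Type*} [DecidableEq V] (E : Finset (Finset V)) (a b : V) : Prop :=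
  2 ≤ (E.filter (fun e => a ∈ e ∧ b ∈ e)).card

/-- A hyperedge is thick if each of its pairs is contained in at least two hyperedges. -/
def ThickEdge {V : Type*} [DecidableEq V] (E : Finset (Finset V)) (h : Finset V) : Prop :=
  ∀ p ∈ h.powersetCard 2, 2 ≤ (E.filter (fun e => p ⊆ e)).card

/-- `v ∉ h` is strongly associated to the hyperedge `h` if at least two of the 3-sets
formed by `v` and a pair of `h` are hyperedges. -/
def StronglyAssoc {V : Type*} [DecidableEq V] (E : Finset (Finset V)) (h : Finset V) (v : V) :
    Prop :=
  v ∉ h ∧ 2 ≤ (hSupport E h v).card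

/-- A linear path of length `k` (given by its sequence of hyperedges): consecutive
hyperedges meet in exactly one vertex, non-consecutive ones are disjoint. -/
def IsLinearPath {V : Type*} [DecidableEq V] (E : Finset (Finset V)) (k : ℕ)
    (h : Fin k → Finset V) : Prop :=
  Function.Injective h ∧ (∀ i, h i ∈ E) ∧
    (∀ i j : Fin k, (i : ℕ) + 1 = (j : ℕ) → (h i ∩ h j).card = 1) ∧
    (∀ i j : Fin k, (i : ℕ) + 2 ≤ (j : ℕ) → h i ∩ h j = ∅)

/-- A linear tree with vertex set `S` and edge set `T`: built from a single vertex by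
repeatedly adding hyperedges meeting the current vertex set in exactly one vertex. -/
inductive IsLinearTree {V : Type*} [DecidableEq V] : Finset V → Finset (Finset V) → Prop
  | single (v : V) : IsLinearTree {v} ∅
  | extend {S : Finset V} {T : Finset (Finset V)} (e : Finset V) :
      IsLinearTree S T → e.card = 3 → (e ∩ S).card = 1 → IsLinearTree (S ∪ e) (insert e T)

set_option maxHeartbeats 1600000 in
/-- If the longest linear path has length at most 2 and a skeleton consists of `s ≥ 3`
hyperedges `v_{2i-1} v_{2i} b` through a common vertex `b`, then no hyperedge of `H`
avoids `b` among the `v_i`'s. -/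
theorem star_skeleton_edges_contain_center {V : Type*} [Fintype V] [DecidableEq V]
    (E : Finset (Finset V)) (h3 : ∀ e ∈ E, e.card = 3) (hcyc : ¬ HasLinearCycle E)
    (hpath : ¬ ∃ h : Fin 3 → Finset V, IsLinearPath E 3 h)
    (s : ℕ) (hs : 3 ≤ s) (b : V) (w : Fin (2 * s) → V) (hinj : Function.Injective w)
    (hb : ∀ i : Fin (2 * s), w i ≠ b)
    (hT : ∀ i : Fin s,
      ({w ⟨2 * i.1, by have := i.2; omega⟩, w ⟨2 * i.1 + 1, by have := i.2; omega⟩, b} :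
        Finset V) ∈ E) :
    ∀ i j k : Fin (2 * s), i ≠ j → j ≠ k → i ≠ k →
      ({w i, w j, w k} : Finset V) ∉ E := by
  intro i j k hij hjk hik he
  -- the star edges
  have hbnd : ∀ t : Fin s, 2 * t.1 + 1 < 2 * s := fun t => by have := t.2; omega
  set St : Fin s → Finset V := fun t =>
    ({w ⟨2 * t.1, by have := t.2; omega⟩, w ⟨2 * t.1 + 1, by have := t.2; omega⟩, b} :
      Finset V) with hStdef
  have hStE : ∀ t, St t ∈ E := fun t => hT t
  have hwS : ∀ (a : Fin (2 * s)) (t : Fin s), w a ∈ St t ↔ a.1 / 2 = t.1 := by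
    intro a t
    simp only [hStdef, Finset.mem_insert, Finset.mem_singleton]
    constructor
    · rintro (h | h | h)
      · have h' : a.1 = 2 * t.1 := congrArg Fin.val (hinj h); omega
      · have h' : a.1 = 2 * t.1 + 1 := congrArg Fin.val (hinj h); omega
      · exact absurd h (hb a)
    · intro h
      have h' : a.1 = 2 * t.1 ∨ a.1 = 2 * t.1 + 1 := by omega
      rcases h' with h' | h'
      · exact Or.inl (congrArg w (Fin.ext h'))
      · exact Or.inr (Or.inl (congrArg w (Fin.ext h')))
  have hbS : ∀ t, b ∈ St t := by intro t; simp [hStdef]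
  have hbe : ∀ a c d : Fin (2 * s), b ∉ ({w a, w c, w d} : Finset V) := by
    intro a c d hmem
    simp only [Finset.mem_insert, Finset.mem_singleton] at hmem
    rcases hmem with h | h | h <;> exact hb _ h.symm
  -- intersection of two distinct star edges
  have interSS : ∀ t t' : Fin s, t.1 ≠ t'.1 → St t ∩ St t' = {b} := by
    intro t t' htt
    ext x
    simp only [Finset.mem_inter, Finset.mem_singleton]
    constructor
    · rintro ⟨h1, h2⟩
      simp only [hStdef, Finset.mem_insert, Finset.mem_singleton] at h1
      rcases h1 with h | h | h
      · subst h; rw [hwS] at h2; simp at h2; omega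
      · subst h; rw [hwS] at h2; simp at h2; omega
      · exact h
    · rintro rfl; exact ⟨hbS t, hbS t'⟩
  -- star edge meets a `w`-triple containing exactly one vertex of its pair
  have interSE : ∀ (t : Fin s) (a c d : Fin (2 * s)), a.1 / 2 = t.1 → c.1 / 2 ≠ t.1 →
      d.1 / 2 ≠ t.1 → St t ∩ ({w a, w c, w d} : Finset V) = {w a} := by
    intro t a c d ha hc hd
    ext x
    simp only [Finset.mem_inter, Finset.mem_singleton]
    constructor
    · rintro ⟨h1, h2⟩
      simp only [Finset.mem_insert, Finset.mem_singleton] at h2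
      rcases h2 with h | h | h
      · exact h
      · subst h; rw [hwS] at h1; exact absurd h1 hc
      · subst h; rw [hwS] at h1; exact absurd h1 hd
    · rintro rfl
      exact ⟨(hwS a t).mpr ha, by simp⟩
  -- star edge disjoint from a `w`-triple avoiding its pair
  have interSEe : ∀ (t : Fin s) (a c d : Fin (2 * s)), a.1 / 2 ≠ t.1 → c.1 / 2 ≠ t.1 →
      d.1 / 2 ≠ t.1 → St t ∩ ({w a, w c, w d} : Finset V) = ∅ := by
    intro t a c d ha hc hd
    ext x
    simp only [Finset.mem_inter, Finset.notMem_empty, iff_false, not_and]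
    intro h1 h2
    simp only [Finset.mem_insert, Finset.mem_singleton] at h2
    rcases h2 with h | h | h
    · subst h; rw [hwS] at h1; exact ha h1
    · subst h; rw [hwS] at h1; exact hc h1
    · subst h; rw [hwS] at h1; exact hd h1
  -- no hyperedge of E contains both vertices of a pair (else a length-3 linear path)
  have key : ∀ a c d : Fin (2 * s), a ≠ c → c ≠ d → a ≠ d →
      ({w a, w c, w d} : Finset V) ∈ E → a.1 / 2 ≠ c.1 / 2 := by
    intro a c d hac hcd had heE hpac
    have hac' : a.1 ≠ c.1 := fun h => hac (Fin.ext h)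
    have hcd' : c.1 ≠ d.1 := fun h => hcd (Fin.ext h)
    have had' : a.1 ≠ d.1 := fun h => had (Fin.ext h)
    have ha2 : a.1 < 2 * s := a.2
    have hd2 : d.1 < 2 * s := d.2
    have hc2 : c.1 < 2 * s := c.2
    have hdne : d.1 / 2 ≠ a.1 / 2 := by omega
    set t1 : Fin s := ⟨d.1 / 2, by omega⟩ with ht1
    obtain ⟨m, hm1, hm2, hm3⟩ : ∃ m, m < s ∧ m ≠ a.1 / 2 ∧ m ≠ d.1 / 2 := by
      by_cases h0 : 0 = a.1 / 2 ∨ 0 = d.1 / 2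
      · by_cases h1 : 1 = a.1 / 2 ∨ 1 = d.1 / 2
        · exact ⟨2, by omega⟩
        · exact ⟨1, by omega⟩
      · exact ⟨0, by omega⟩
    set t2 : Fin s := ⟨m, hm1⟩ with ht2
    -- the path  St t2, St t1, {w a, w c, w d}
    have H01 : St t2 ∩ St t1 = {b} := interSS t2 t1 hm3
    have eperm : ({w a, w c, w d} : Finset V) = {w d, w a, w c} := by
      ext x; simp only [Finset.mem_insert, Finset.mem_singleton]; tauto
    have H12 : St t1 ∩ ({w a, w c, w d} : Finset V) = {w d} := by
      rw [eperm]
      exact interSE t1 d a c rfl hdne.symm (by show c.1 / 2 ≠ d.1 / 2; omega)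
    have H02 : St t2 ∩ ({w a, w c, w d} : Finset V) = ∅ :=
      interSEe t2 a c d (Ne.symm hm2) (by show c.1 / 2 ≠ m; omega)
        (by show d.1 / 2 ≠ m; omega)
    have hne1 : St t2 ≠ St t1 := by
      intro h
      have hmm : w ⟨2 * m, by omega⟩ ∈ St t2 := (hwS _ t2).mpr (by show 2 * m / 2 = m; omega)
      rw [h, hwS] at hmm
      have : 2 * m / 2 = d.1 / 2 := hmm
      omega
    have hne2 : St t2 ≠ ({w a, w c, w d} : Finset V) := fun h => hbe a c d (h ▸ hbS t2)
    have hne3 : St t1 ≠ ({w a, w c, w d} : Finset V) := fun h => hbe a c d (h ▸ hbS t1)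
    set hP : Fin 3 → Finset V := fun x =>
      if x = 0 then St t2 else if x = 1 then St t1 else ({w a, w c, w d} : Finset V)
      with hPdef
    have hP0 : hP 0 = St t2 := rfl
    have hP1 : hP 1 = St t1 := rfl
    have hP2 : hP 2 = ({w a, w c, w d} : Finset V) := rfl
    have hz3 : ∀ x : Fin 3, x = 0 ∨ x = 1 ∨ x = 2 := by decide
    refine hpath ⟨hP, ?_, ?_, ?_, ?_⟩
    · intro x y hxy
      rcases hz3 x with rfl | rfl | rfl <;> rcases hz3 y with rfl | rfl | rfl <;>
        simp only [hP0, hP1, hP2] at hxy <;>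
        first
          | rfl
          | exact absurd hxy hne1 | exact absurd hxy.symm hne1
          | exact absurd hxy hne2 | exact absurd hxy.symm hne2
          | exact absurd hxy hne3 | exact absurd hxy.symm hne3
    · intro x
      rcases hz3 x with rfl | rfl | rfl
      · exact hStE t2
      · exact hStE t1
      · exact heE
    · intro x y hxy
      rcases hz3 x with rfl | rfl | rfl <;> rcases hz3 y with rfl | rfl | rfl <;>
        first
          | exact absurd hxy (by decide)
          | (show (St t2 ∩ St t1).card = 1; rw [H01]; simp)
          | (show (St t1 ∩ ({w a, w c, w d} : Finset V)).card = 1; rw [H12]; simp)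
    · intro x y hxy
      rcases hz3 x with rfl | rfl | rfl <;> rcases hz3 y with rfl | rfl | rfl <;>
        first
          | exact absurd hxy (by decide)
          | (show St t2 ∩ ({w a, w c, w d} : Finset V) = ∅; exact H02)
  -- now all three pairs are distinct
  have hpij : i.1 / 2 ≠ j.1 / 2 := key i j k hij hjk hik he
  have hpik : i.1 / 2 ≠ k.1 / 2 := by
    have heq : ({w i, w k, w j} : Finset V) = {w i, w j, w k} := by
      ext x; simp only [Finset.mem_insert, Finset.mem_singleton]; tauto
    exact key i k j hik (Ne.symm hjk) hij (heq ▸ he)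
  have hpjk : j.1 / 2 ≠ k.1 / 2 := by
    have heq : ({w j, w k, w i} : Finset V) = {w i, w j, w k} := by
      ext x; simp only [Finset.mem_insert, Finset.mem_singleton]; tauto
    exact key j k i hjk (Ne.symm hik) (Ne.symm hij) (heq ▸ he)
  -- build a linear 3-cycle  St t1, e, St t2
  have hi2 : i.1 < 2 * s := i.2
  have hj2 : j.1 < 2 * s := j.2
  set t1 : Fin s := ⟨i.1 / 2, by omega⟩ with ht1
  set t2 : Fin s := ⟨j.1 / 2, by omega⟩ with ht2
  have H01 : St t1 ∩ ({w i, w j, w k} : Finset V) = {w i} :=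
    interSE t1 i j k rfl (Ne.symm hpij) (Ne.symm hpik)
  have H12 : ({w i, w j, w k} : Finset V) ∩ St t2 = {w j} := by
    rw [Finset.inter_comm]
    have heq : ({w i, w j, w k} : Finset V) = {w j, w i, w k} := by
      ext x; simp only [Finset.mem_insert, Finset.mem_singleton]; tauto
    rw [heq]
    exact interSE t2 j i k rfl hpij (Ne.symm hpjk)
  have H20 : St t2 ∩ St t1 = {b} := interSS t2 t1 (Ne.symm hpij)
  have hbi : b ≠ w i := Ne.symm (hb i)
  have hbj : b ≠ w j := Ne.symm (hb j)
  have hwij : w i ≠ w j := fun h => hij (hinj h)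
  have hne1 : St t1 ≠ ({w i, w j, w k} : Finset V) := fun h => hbe i j k (h ▸ hbS t1)
  have hne2 : St t2 ≠ ({w i, w j, w k} : Finset V) := fun h => hbe i j k (h ▸ hbS t2)
  have hne3 : St t1 ≠ St t2 := by
    intro h
    have hmem : w i ∈ St t1 := (hwS i t1).mpr rfl
    rw [h, hwS] at hmem
    exact hpij hmem
  set vC : ZMod 3 → V := fun x => if x = 0 then b else if x = 1 then w i else w j with hvCdef
  set hC : ZMod 3 → Finset V := fun x =>
    if x = 0 then St t1 else if x = 1 then ({w i, w j, w k} : Finset V) else St t2 with hCdef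
  have hv0 : vC 0 = b := rfl
  have hn10 : (1 : ZMod 3) ≠ 0 := by decide
  have hn20 : (2 : ZMod 3) ≠ 0 := by decide
  have hn21 : (2 : ZMod 3) ≠ 1 := by decide
  have hv1 : vC 1 = w i := by simp [hvCdef, hn10]
  have hv2 : vC 2 = w j := by simp [hvCdef, hn20, hn21]
  have hC0 : hC 0 = St t1 := rfl
  have hC1 : hC 1 = ({w i, w j, w k} : Finset V) := by
    simp [hCdef, hn10]
  have hC2 : hC 2 = St t2 := by simp [hCdef, hn20, hn21]
  have hz : ∀ x : ZMod 3, x = 0 ∨ x = 1 ∨ x = 2 := by decide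
  refine hcyc ⟨3, vC, hC, le_refl 3, ?_, ?_, ?_, ?_, ?_⟩
  · intro x y hxy
    rcases hz x with rfl | rfl | rfl <;> rcases hz y with rfl | rfl | rfl <;>
      simp only [hv0, hv1, hv2] at hxy <;>
      first
        | rfl
        | exact absurd hxy hbi | exact absurd hxy.symm hbi
        | exact absurd hxy hbj | exact absurd hxy.symm hbj
        | exact absurd hxy hwij | exact absurd hxy.symm hwij
  · intro x y hxy
    rcases hz x with rfl | rfl | rfl <;> rcases hz y with rfl | rfl | rfl <;>
      simp only [hC0, hC1, hC2] at hxy <;>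
      first
        | rfl
        | exact absurd hxy hne1 | exact absurd hxy.symm hne1
        | exact absurd hxy hne2 | exact absurd hxy.symm hne2
        | exact absurd hxy hne3 | exact absurd hxy.symm hne3
  · intro x
    rcases hz x with rfl | rfl | rfl
    · rw [hC0]; exact hStE t1
    · rw [hC1]; exact he
    · rw [hC2]; exact hStE t2
  · intro x
    rcases hz x with rfl | rfl | rfl
    · rw [show (0 + 1 : ZMod 3) = 1 from by decide, hC0, hC1, hv1]; exact H01
    · rw [show (1 + 1 : ZMod 3) = 2 from by decide, hC1, hC2, hv2]; exact H12
    · rw [show (2 + 1 : ZMod 3) = 0 from by decide, hC2, hC0, hv0]; exact H20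
  · have triv : ∀ x y : ZMod 3, x ≠ y → x + 1 ≠ y → y + 1 ≠ x → False := by decide
    intro x y h1 h2 h3
    exact (triv x y h1 h2 h3).elim
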